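/- Let N, d ≥ 1, let ν_I : (ZMod N)^I → ℝ for I ⊊ {1,…,d} be nonnegative weights, let ν_{[d]} : (ZMod N)^d → ℝ be nonnegative, let Ω ⊆ (ZMod N)^d have face structure, and let T > 1, C > 0, η > 0. Assume: (i) |Dg(x)| ≤ T for every g ∈ S_T and every x ∈ Ω; (ii) there are constants C(0), C(1), C(2), … such that for every m ≥ 0 and all g_1,…,g_m ∈ S_T, |⟨∏_{j=1}^m Dg_j, f⟩_ν| ≤ C(m) for every f with ‖f‖_{□,ν} ≤ 1 (the empty product being the constant function 1); (iii) φ = Σ_{i=1}^k λ_i Dg_i with g_i ∈ S_T and Σ_{i=1}^k |λ_i| ≤ C. Then |φ(x)| ≤ CT for all x, and there exists a real polynomial P(u) = Σ_{j=0}^m a_j u^j with sup_{|u| ≤ CT} |P(u) − max(u,0)| ≤ η, such that sup_x |P(φ(x)) − max(φ(x),0)| ≤ η and |⟨P∘φ, f⟩_ν| ≤ Σ_{j=0}^m C(j) |a_j| C^j for every f with ‖f‖_{□,ν} ≤ 1. -/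

import Mathlib

noncomputable section
open Finset

/-- `P_ω(x,y)`: the point whose `i`-th coordinate is `x i` if `ω i = false` and `y i` otherwise. -/
def proj {ι : Type*} {N : ℕ} (ω : ι → Bool) (x y : ι → ZMod N) : ι → ZMod N :=
  fun i => if ω i then y i else x i

/-- `P_{ω_I}(x_I, y_I)` as a function on the subtype `↥I`. -/
def projI {ι : Type*} {N : ℕ} {I : Finset ι} (ω : I → Bool) (x y : ι → ZMod N) :
    I → ZMod N :=
  fun i => if ω i then y i.1 else x i.1

/-- The product of the weights `ν_I(P_{ω_I}(x_I,y_I))` over proper subsets `I ⊊ ι`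
and all `ω_I ∈ {0,1}^I`. -/
def weightProd {ι : Type*} [Fintype ι] [DecidableEq ι] {N : ℕ}
    (ν : (I : Finset ι) → (I → ZMod N) → ℝ) (x y : ι → ZMod N) : ℝ :=
  ∏ I ∈ univ.filter (fun I : Finset ι => I ≠ univ), ∏ ω : I → Bool, ν I (projI ω x y)

/-- The weighted Gowers inner product `⟨(f_ω)⟩_{□,ν}`. -/
def gowersInner {ι : Type*} [Fintype ι] [DecidableEq ι] {N : ℕ} [NeZero N]
    (ν : (I : Finset ι) → (I → ZMod N) → ℝ)
    (f : (ι → Bool) → (ι → ZMod N) → ℝ) : ℝ :=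
  Finset.expect Finset.univ fun x : ι → ZMod N =>
    Finset.expect Finset.univ fun y : ι → ZMod N =>
      (∏ ω : ι → Bool, f ω (proj ω x y)) * weightProd ν x y

/-- The weighted box norm `‖f‖_{□,ν}`. -/
def boxNorm {ι : Type*} [Fintype ι] [DecidableEq ι] {N : ℕ} [NeZero N]
    (ν : (I : Finset ι) → (I → ZMod N) → ℝ) (f : (ι → ZMod N) → ℝ) : ℝ :=
  gowersInner ν (fun _ => f) ^ (((2 : ℝ) ^ (Fintype.card ι))⁻¹)


/-- The weighted inner product `⟨f,g⟩_ν`. -/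
def wInner {ι : Type*} [Fintype ι] [DecidableEq ι] {N : ℕ} [NeZero N]
    (ν : (I : Finset ι) → (I → ZMod N) → ℝ) (f g : (ι → ZMod N) → ℝ) : ℝ :=
  Finset.expect Finset.univ fun x : ι → ZMod N =>
    f x * g x * ∏ I ∈ univ.filter (fun I : Finset ι => I ≠ univ), ν I (fun i => x i.1)

/-- The dual function `Df`. -/
def dualFn {ι : Type*} [Fintype ι] [DecidableEq ι] {N : ℕ} [NeZero N]
    (ν : (I : Finset ι) → (I → ZMod N) → ℝ) (f : (ι → ZMod N) → ℝ)
    (x : ι → ZMod N) : ℝ :=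
  Finset.expect Finset.univ fun y : ι → ZMod N =>
    (∏ ω ∈ univ.filter (fun ω : ι → Bool => ω ≠ fun _ => false), f (proj ω x y)) *
      ∏ I ∈ univ.filter (fun I : Finset ι => I ≠ univ),
        ∏ ω ∈ univ.filter (fun ω : I → Bool => ω ≠ fun _ => false), ν I (projI ω x y)

/-- A set `Ω` has face structure if it is the intersection of sets `Ω_J` over `∅ ≠ J ⊊ ι`,
where membership in `Ω_J` depends only on the coordinates outside of `J`. -/
def HasFaceStructure {ι : Type*} [Fintype ι] [DecidableEq ι] {N : ℕ}
    (Ω : Set (ι → ZMod N)) : Prop :=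
  ∃ ΩJ : Finset ι → Set (ι → ZMod N),
    (∀ J : Finset ι, J ≠ ∅ → J ≠ univ →
      ∀ x y : ι → ZMod N, (∀ i, i ∉ J → x i = y i) → (x ∈ ΩJ J → y ∈ ΩJ J)) ∧
    Ω = ⋂ J ∈ {J : Finset ι | J ≠ ∅ ∧ J ≠ univ}, ΩJ J

/-- `F_T`: functions supported on `Ω`. -/
def FT {ι : Type*} {N : ℕ} (Ω : Set (ι → ZMod N)) : Set ((ι → ZMod N) → ℝ) :=
  {f | ∀ x, x ∉ Ω → f x = 0}

/-- `S_T`: functions supported on `Ω` and dominated by `ν_{[d]} + 2`. -/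
def STset {ι : Type*} {N : ℕ} (Ω : Set (ι → ZMod N)) (νd : (ι → ZMod N) → ℝ) :
    Set ((ι → ZMod N) → ℝ) :=
  {f | f ∈ FT Ω ∧ ∀ x, |f x| ≤ νd x + 2}

section Helpers

variable {d N : ℕ} [NeZero N]

lemma zero_mem_STset {Ω : Set (Fin d → ZMod N)} {νd : (Fin d → ZMod N) → ℝ}
    (hνd : ∀ x, 0 ≤ νd x) : (fun _ => (0 : ℝ)) ∈ STset Ω νd := by
  refine ⟨fun x _ => rfl, fun x => ?_⟩
  simp only [abs_zero]
  linarith [hνd x]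

lemma dualFn_eq_zero {ν : (I : Finset (Fin d)) → (I → ZMod N) → ℝ}
    {Ω : Set (Fin d → ZMod N)} (hΩ : HasFaceStructure Ω)
    {g : (Fin d → ZMod N) → ℝ} (hgΩ : g ∈ FT Ω)
    {x : Fin d → ZMod N} (hx : x ∉ Ω) : dualFn ν g x = 0 := by
  obtain ⟨ΩJ, hmono, hinter⟩ := hΩ
  have hx' : ∃ J : Finset (Fin d), (J ≠ ∅ ∧ J ≠ univ) ∧ x ∉ ΩJ J := by
    by_contra h
    push_neg at h
    exact hx (hinter ▸ Set.mem_iInter₂.2 fun J hJ => by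
      obtain ⟨h1, h2⟩ := hJ
      exact h J ⟨Finset.nonempty_iff_ne_empty.2 h1, h2⟩)
  obtain ⟨J, ⟨hJne, hJnu⟩, hxJ⟩ := hx'
  apply Finset.expect_eq_zero
  intro y _
  have hzero : (∏ ω ∈ univ.filter (fun ω : Fin d → Bool => ω ≠ fun _ => false),
      g (proj ω x y)) = 0 := by
    apply Finset.prod_eq_zero (i := fun i => decide (i ∈ J))
    · simp only [Finset.mem_filter, Finset.mem_univ, true_and]
      obtain ⟨j, hj⟩ := Finset.nonempty_iff_ne_empty.2 hJne
      intro h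
      have := congrFun h j
      simp [hj] at this
    · apply hgΩ
      intro hmem
      rw [hinter] at hmem
      have hmemJ : proj (fun i => decide (i ∈ J)) x y ∈ ΩJ J :=
        Set.mem_iInter₂.1 hmem J ⟨hJne, hJnu⟩
      exact hxJ (hmono J hJne hJnu _ x
        (fun i hi => by simp [proj, hi]) hmemJ)
  rw [hzero, zero_mul]

lemma wInner_sum {ν : (I : Finset (Fin d)) → (I → ZMod N) → ℝ} {κ : Type*}
    (s : Finset κ) (F : κ → (Fin d → ZMod N) → ℝ) (f : (Fin d → ZMod N) → ℝ) :
    wInner ν (fun x => ∑ t ∈ s, F t x) f = ∑ t ∈ s, wInner ν (F t) f := by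
  unfold wInner
  rw [← Finset.expect_sum_comm]
  refine Finset.expect_congr rfl fun x _ => ?_
  rw [Finset.sum_mul, Finset.sum_mul]

lemma wInner_smul {ν : (I : Finset (Fin d)) → (I → ZMod N) → ℝ}
    (c : ℝ) (F f : (Fin d → ZMod N) → ℝ) :
    wInner ν (fun x => c * F x) f = c * wInner ν F f := by
  unfold wInner
  rw [Finset.mul_expect]
  refine Finset.expect_congr rfl fun x _ => ?_
  ring

end Helpers

/-- Polynomial approximation of the positive part of a bounded combination of dual functions,
with control of the dual box norm. -/
theorem polynomial_approximation (N d : ℕ) [NeZero N] (hd : 1 ≤ d)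
    (ν : (I : Finset (Fin d)) → (I → ZMod N) → ℝ)
    (hν : ∀ I : Finset (Fin d), I ≠ univ → ∀ z, 0 ≤ ν I z)
    (νd : (Fin d → ZMod N) → ℝ) (hνd : ∀ x, 0 ≤ νd x)
    (Ω : Set (Fin d → ZMod N)) (hΩ : HasFaceStructure Ω)
    (T C η : ℝ) (hT : 1 < T) (hC : 0 < C) (hη : 0 < η)
    (Cm : ℕ → ℝ)
    (hdual : ∀ g ∈ STset Ω νd, ∀ x ∈ Ω, |dualFn ν g x| ≤ T)
    (hCm : ∀ (m : ℕ) (g : Fin m → ((Fin d → ZMod N) → ℝ)), (∀ j, g j ∈ STset Ω νd) →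
      ∀ f : (Fin d → ZMod N) → ℝ, boxNorm ν f ≤ 1 →
        |wInner ν (fun x => ∏ j, dualFn ν (g j) x) f| ≤ Cm m)
    (φ : (Fin d → ZMod N) → ℝ) (k : ℕ) (lam : Fin k → ℝ)
    (g : Fin k → ((Fin d → ZMod N) → ℝ)) (hg : ∀ i, g i ∈ STset Ω νd)
    (hφ : φ = fun x => ∑ i, lam i * dualFn ν (g i) x)
    (hlam : ∑ i, |lam i| ≤ C) :
    (∀ x, |φ x| ≤ C * T) ∧
    ∃ P : Polynomial ℝ,
      (∀ u : ℝ, |u| ≤ C * T → |P.eval u - max u 0| ≤ η) ∧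
      (∀ x, |P.eval (φ x) - max (φ x) 0| ≤ η) ∧
      (∀ f : (Fin d → ZMod N) → ℝ, boxNorm ν f ≤ 1 →
        |wInner ν (fun x => P.eval (φ x)) f| ≤
          ∑ j ∈ Finset.range (P.natDegree + 1), Cm j * |P.coeff j| * C ^ j) := by
  have hT0 : (0 : ℝ) ≤ T := by linarith
  have hdual' : ∀ gg ∈ STset Ω νd, ∀ x, |dualFn ν gg x| ≤ T := by
    intro gg hgg x
    by_cases hx : x ∈ Ω
    · exact hdual gg hgg x hx
    · rw [dualFn_eq_zero hΩ hgg.1 hx]; simpa using hT0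
  have hφ_bound : ∀ x, |φ x| ≤ C * T := by
    intro x
    rw [hφ]
    calc |∑ i, lam i * dualFn ν (g i) x| ≤ ∑ i, |lam i * dualFn ν (g i) x| :=
          Finset.abs_sum_le_sum_abs _ _
      _ ≤ ∑ i, |lam i| * T := by
          refine Finset.sum_le_sum fun i _ => ?_
          rw [abs_mul]
          exact mul_le_mul_of_nonneg_left (hdual' (g i) (hg i) x) (abs_nonneg _)
      _ = (∑ i, |lam i|) * T := by rw [Finset.sum_mul]
      _ ≤ C * T := mul_le_mul_of_nonneg_right hlam hT0
  refine ⟨hφ_bound, ?_⟩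
  obtain ⟨P, hP⟩ := exists_polynomial_near_of_continuousOn (-(C * T)) (C * T)
    (fun u => max u 0) ((continuous_id.max continuous_const).continuousOn) η hη
  have hPapprox : ∀ u : ℝ, |u| ≤ C * T → |P.eval u - max u 0| ≤ η := by
    intro u hu
    exact le_of_lt (hP u (by rw [Set.mem_Icc]; constructor <;> [linarith [abs_le.1 hu];
      exact (abs_le.1 hu).2]))
  refine ⟨P, hPapprox, fun x => hPapprox _ (hφ_bound x), ?_⟩
  intro f hf
  -- key bound on powers of φ
  have hpow : ∀ j : ℕ, |wInner ν (fun x => φ x ^ j) f| ≤ Cm j * C ^ j := by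
    intro j
    have hCm0 : 0 ≤ Cm j := le_trans (abs_nonneg _)
      (hCm j (fun _ => fun _ => 0) (fun _ => zero_mem_STset hνd) f hf)
    have hexp : (fun x => φ x ^ j) = fun x =>
        ∑ t : Fin j → Fin k, (∏ l, lam (t l)) * ∏ l, dualFn ν (g (t l)) x := by
      funext x
      rw [hφ]
      simp only [Fintype.sum_pow]
      exact Finset.sum_congr rfl fun t _ => by rw [Finset.prod_mul_distrib]
    rw [hexp, wInner_sum]
    calc |∑ t : Fin j → Fin k, wInner ν
            (fun x => (∏ l, lam (t l)) * ∏ l, dualFn ν (g (t l)) x) f|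
        ≤ ∑ t : Fin j → Fin k, |wInner ν
            (fun x => (∏ l, lam (t l)) * ∏ l, dualFn ν (g (t l)) x) f| :=
          Finset.abs_sum_le_sum_abs _ _
      _ ≤ ∑ t : Fin j → Fin k, (∏ l, |lam (t l)|) * Cm j := by
          refine Finset.sum_le_sum fun t _ => ?_
          rw [wInner_smul, abs_mul, ← Finset.abs_prod]
          exact mul_le_mul_of_nonneg_left
            (hCm j (fun l => g (t l)) (fun l => hg (t l)) f hf) (abs_nonneg _)
      _ = (∑ i, |lam i|) ^ j * Cm j := by rw [← Finset.sum_mul, Fintype.sum_pow]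
      _ ≤ C ^ j * Cm j := by
          refine mul_le_mul_of_nonneg_right ?_ hCm0
          exact pow_le_pow_left₀ (Finset.sum_nonneg fun i _ => abs_nonneg _) hlam j
      _ = Cm j * C ^ j := mul_comm _ _
  have hexpand : (fun x => P.eval (φ x)) = fun x =>
      ∑ j ∈ Finset.range (P.natDegree + 1), P.coeff j * φ x ^ j := by
    funext x
    exact Polynomial.eval_eq_sum_range _
  rw [hexpand, wInner_sum]
  calc |∑ j ∈ Finset.range (P.natDegree + 1),
          wInner ν (fun x => P.coeff j * φ x ^ j) f|
      ≤ ∑ j ∈ Finset.range (P.natDegree + 1),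
          |wInner ν (fun x => P.coeff j * φ x ^ j) f| := Finset.abs_sum_le_sum_abs _ _
    _ ≤ ∑ j ∈ Finset.range (P.natDegree + 1), Cm j * |P.coeff j| * C ^ j := by
        refine Finset.sum_le_sum fun j _ => ?_
        rw [wInner_smul, abs_mul]
        calc |P.coeff j| * |wInner ν (fun x => φ x ^ j) f|
            ≤ |P.coeff j| * (Cm j * C ^ j) :=
              mul_le_mul_of_nonneg_left (hpow j) (abs_nonneg _)
          _ = Cm j * |P.coeff j| * C ^ j := by ring

end
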